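/- Let R be a noetherian commutative ring, M a finitely generated R-module, and A a matrix over R. Then A is partition regular over M if and only if there exists an associated prime 𝔭 of M such that A (with entries reduced mod 𝔭) is partition regular over R/𝔭. -/

import Mathlib

open BigOperators

/-- A matrix `A` over `S` is partition regular over the `S`-module `M` for `r` colours if
every colouring of `M` with `r` colours admits a nonzero monochromatic solution of `A m = 0`. -/
def IsPR {S : Type*} [CommRing S] {k l : ℕ} (A : Matrix (Fin k) (Fin l) S)
    (M : Type*) [AddCommGroup M] [Module S M] (r : ℕ) : Prop :=
  ∀ χ : M → Fin r, ∃ m : Fin l → M, m ≠ 0 ∧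
    (∀ i, ∑ j, A i j • m j = 0) ∧ ∀ j j', χ (m j) = χ (m j')

/-- Partition regularity for every (positive) finite number of colours. -/
def IsPRAll {S : Type*} [CommRing S] {k l : ℕ} (A : Matrix (Fin k) (Fin l) S)
    (M : Type*) [AddCommGroup M] [Module S M] : Prop :=
  ∀ r : ℕ, 1 ≤ r → IsPR A M r

section Aux

variable {R : Type*} [CommRing R] {k l : ℕ} (A : Matrix (Fin k) (Fin l) R)

/-- A "bad" colouring with `r` colours: every monochromatic solution is zero. -/
def Bad (X : Type*) [AddCommGroup X] [Module R X] (r : ℕ) : Prop :=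
  ∃ χ : X → Fin r, ∀ m : Fin l → X,
    (∀ i, ∑ j, A i j • m j = 0) → (∀ j j', χ (m j) = χ (m j')) → m = 0

/-- `A` is not partition regular over `X` (there is a bad colouring). -/
def NotPR (X : Type*) [AddCommGroup X] [Module R X] : Prop :=
  ∃ r : ℕ, 0 < r ∧ Bad A X r

variable {A}

lemma notPR_iff_not_isPRAll (X : Type*) [AddCommGroup X] [Module R X] :
    NotPR A X ↔ ¬ IsPRAll A X := by
  constructor
  · rintro ⟨r, hr, χ, hχ⟩ h
    obtain ⟨m, hm0, hsol, hmono⟩ := h r hr χ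
    exact hm0 (hχ m hsol hmono)
  · intro h
    rw [IsPRAll] at h
    push_neg at h
    obtain ⟨r, hr, hPR⟩ := h
    rw [IsPR] at hPR
    push_neg at hPR
    obtain ⟨χ, hχ⟩ := hPR
    refine ⟨r, hr, χ, fun m hsol hmono => ?_⟩
    by_contra hm0
    obtain ⟨j, j', hne⟩ := hχ m hm0 hsol
    exact hne (hmono j j')

lemma Bad.of_injective {X Y : Type*} [AddCommGroup X] [Module R X]
    [AddCommGroup Y] [Module R Y] (f : X →ₗ[R] Y) (hf : Function.Injective f)
    {r : ℕ} (h : Bad A Y r) : Bad A X r := by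
  obtain ⟨χ, hχ⟩ := h
  refine ⟨χ ∘ f, fun m hsol hmono => ?_⟩
  have key : ∀ i, ∑ j, A i j • f (m j) = 0 := by
    intro i
    rw [← map_zero f, ← hsol i, map_sum]
    exact Finset.sum_congr rfl fun j _ => (map_smul f _ _).symm
  have h0 := hχ (fun j => f (m j)) key (fun j j' => hmono j j')
  funext j
  apply hf
  have := congrFun h0 j
  simp only [Pi.zero_apply] at this
  rw [Pi.zero_apply, this, map_zero]

lemma NotPR.of_injective {X Y : Type*} [AddCommGroup X] [Module R X]
    [AddCommGroup Y] [Module R Y] (f : X →ₗ[R] Y) (hf : Function.Injective f)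
    (h : NotPR A Y) : NotPR A X := by
  obtain ⟨r, hr, hb⟩ := h
  exact ⟨r, hr, hb.of_injective f hf⟩

lemma notPR_of_subsingleton (X : Type*) [AddCommGroup X] [Module R X]
    [Subsingleton X] : NotPR A X :=
  ⟨1, Nat.one_pos, ⟨fun _ => 0, fun m _ _ => funext fun j => Subsingleton.elim _ _⟩⟩

/-- The extension lemma: a bad colouring for a submodule and one for the quotient
combine to a bad colouring of the whole module. -/
lemma notPR_ext {X : Type*} [AddCommGroup X] [Module R X] (N : Submodule R X)
    (h1 : NotPR A N) (h2 : NotPR A (X ⧸ N)) : NotPR A X := by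
  classical
  obtain ⟨r₁, hr₁, χ₁, hχ₁⟩ := h1
  obtain ⟨r₂, hr₂, χ₂, hχ₂⟩ := h2
  refine ⟨r₁ + r₂, by omega, ?_⟩
  refine ⟨fun x => if h : x ∈ N then Fin.castAdd r₂ (χ₁ ⟨x, h⟩)
    else Fin.natAdd r₁ (χ₂ (Submodule.Quotient.mk x)), fun m hsol hmono => ?_⟩
  by_cases hall : ∀ j, m j ∈ N
  · have hsol' : ∀ i, ∑ j, A i j • (⟨m j, hall j⟩ : N) = 0 := by
      intro i
      apply Subtype.ext
      push_cast
      simpa using hsol i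
    have hmono' : ∀ j j', χ₁ ⟨m j, hall j⟩ = χ₁ ⟨m j', hall j'⟩ := by
      intro j j'
      have := hmono j j'
      beta_reduce at this
      rw [dif_pos (hall j), dif_pos (hall j')] at this
      have hv := congrArg Fin.val this
      simp only [Fin.coe_castAdd] at hv
      exact Fin.val_injective hv
    have h0 := hχ₁ (fun j => ⟨m j, hall j⟩) hsol' hmono'
    funext j
    have : (⟨m j, hall j⟩ : N) = 0 := congrFun h0 j
    simpa using congrArg Subtype.val this
  · push_neg at hall
    obtain ⟨j₀, hj₀⟩ := hall
    have hnone : ∀ j, m j ∉ N := by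
      intro j hj
      have := hmono j j₀
      beta_reduce at this
      rw [dif_pos hj, dif_neg hj₀] at this
      have hv := congrArg Fin.val this
      simp only [Fin.coe_castAdd, Fin.coe_natAdd] at hv
      have := (χ₁ ⟨m j, hj⟩).isLt
      omega
    have hsol'' : ∀ i, ∑ j, A i j • (N.mkQ (m j)) = 0 := by
      intro i
      rw [← map_zero N.mkQ, ← hsol i, map_sum]
      exact Finset.sum_congr rfl fun j _ => (map_smul N.mkQ _ _).symm
    have hmono'' : ∀ j j', χ₂ (N.mkQ (m j)) = χ₂ (N.mkQ (m j')) := by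
      intro j j'
      have := hmono j j'
      beta_reduce at this
      rw [dif_neg (hnone j), dif_neg (hnone j')] at this
      have hv := congrArg Fin.val this
      simp only [Fin.coe_natAdd] at hv
      exact Fin.val_injective (by omega :
        (χ₂ (Submodule.Quotient.mk (m j))).val = (χ₂ (Submodule.Quotient.mk (m j'))).val)
    have h0 := hχ₂ (fun j => N.mkQ (m j)) hsol'' hmono''
    have : N.mkQ (m j₀) = 0 := congrFun h0 j₀
    rw [Submodule.mkQ_apply, Submodule.Quotient.mk_eq_zero] at this
    exact absurd this (hnone j₀)

lemma one_not_mem_of_prime {p : Ideal R} (hp : p.IsPrime) : (1 : R) ∉ p :=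
  fun h => hp.ne_top ((Ideal.eq_top_iff_one p).mpr h)

lemma mk_mul_smul (p : Ideal R) (a b : R) :
    (Ideal.Quotient.mk p (a * b)) = a • Ideal.Quotient.mk p b := by
  rw [← Ideal.Quotient.mk_eq_mk, ← Ideal.Quotient.mk_eq_mk, ← Submodule.Quotient.mk_smul,
    smul_eq_mul]

lemma mk_smul_eq_smul (p : Ideal R) (a : R) (x : R ⧸ p) :
    (Ideal.Quotient.mk p a) • x = a • x := by
  obtain ⟨b, rfl⟩ := Ideal.Quotient.mk_surjective x
  rw [smul_eq_mul, ← map_mul, mk_mul_smul]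

/-- Generator-count induction: a finitely generated module killed by a prime `p` and
torsion-free over `R ⧸ p` is not partition regular if `R ⧸ p` is not. -/
lemma genInd {p : Ideal R} (hp : p.IsPrime) (hbad : NotPR A (R ⧸ p)) (n : ℕ) :
    ∀ (X : Type*) [AddCommGroup X] [Module R X] [IsNoetherian R X],
      (∃ s : Fin n → X, Submodule.span R (Set.range s) = ⊤) →
      (∀ a ∈ p, ∀ x : X, a • x = 0) →
      (∀ s ∉ p, ∀ x : X, s • x = 0 → x = 0) →
      NotPR A X := by
  induction n with
  | zero =>
    intro X _ _ _ hgen _ _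
    obtain ⟨s, hs⟩ := hgen
    rw [Set.range_eq_empty s, Submodule.span_empty] at hs
    have : Subsingleton X := by
      constructor
      intro a b
      have ha : a ∈ (⊥ : Submodule R X) := hs ▸ Submodule.mem_top
      have hb : b ∈ (⊥ : Submodule R X) := hs ▸ Submodule.mem_top
      rw [Submodule.mem_bot] at ha hb
      rw [ha, hb]
    exact notPR_of_subsingleton X
  | succ n ih =>
    intro X _ _ _ hgen hp0 htf
    classical
    obtain ⟨s, hs⟩ := hgen
    by_cases hx₀ : s 0 = 0
    · -- the first generator is zero: drop it
      refine ih X ⟨s ∘ Fin.succ, ?_⟩ hp0 htf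
      rw [Fin.range_fin_succ, hx₀, Submodule.span_insert_zero] at hs
      exact hs
    · set x₀ : X := s 0 with hx₀def
      -- saturation of the first generator
      set Q₁ : Submodule R X :=
        { carrier := {x | ∃ d ∉ p, d • x ∈ Submodule.span R {x₀}}
          add_mem' := by
            rintro a b ⟨d₁, hd₁, h₁⟩ ⟨d₂, hd₂, h₂⟩
            refine ⟨d₁ * d₂, fun h => ((hp.mem_or_mem h).elim hd₁ hd₂), ?_⟩
            rw [smul_add]
            refine Submodule.add_mem _ ?_ ?_
            · rw [mul_comm, mul_smul]
              exact Submodule.smul_mem _ _ h₁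
            · rw [mul_smul]
              exact Submodule.smul_mem _ _ h₂
          zero_mem' := ⟨1, one_not_mem_of_prime hp, by simp⟩
          smul_mem' := by
            rintro cc x ⟨d, hd, h⟩
            refine ⟨d, hd, ?_⟩
            rw [smul_comm]
            exact Submodule.smul_mem _ _ h } with hQ₁def
      have hx₀Q₁ : x₀ ∈ Q₁ :=
        ⟨1, one_not_mem_of_prime hp, by simpa using Submodule.mem_span_singleton_self x₀⟩
      have hker : ∀ a : R, a • x₀ = 0 → a ∈ p := by
        intro a ha
        by_contra hap
        exact hx₀ (htf a hap x₀ ha)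
      -- uniform denominator on Q₁
      obtain ⟨S, hS⟩ := IsNoetherian.noetherian Q₁
      have hden : ∀ S' : Finset X, (∀ v ∈ S', (v : X) ∈ Q₁) →
          ∃ d, d ∉ p ∧ ∀ v ∈ S', d • v ∈ Submodule.span R {x₀} := by
        intro S'
        induction S' using Finset.induction with
        | empty => exact fun _ => ⟨1, one_not_mem_of_prime hp, by simp⟩
        | @insert a S'' ha ihS =>
          intro hmem
          obtain ⟨d, hd, hdS⟩ := ihS fun v hv => hmem v (Finset.mem_insert_of_mem hv)
          obtain ⟨da, hda, hda2⟩ := hmem a (Finset.mem_insert_self a S'')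
          refine ⟨da * d, fun h => ((hp.mem_or_mem h).elim hda hd), ?_⟩
          intro v hv
          rcases Finset.mem_insert.mp hv with rfl | hv
          · rw [mul_comm, mul_smul]
            exact Submodule.smul_mem _ _ hda2
          · rw [mul_smul]
            exact Submodule.smul_mem _ _ (hdS v hv)
      obtain ⟨d, hd, hdS⟩ := hden S (fun v hv => hS ▸ Submodule.subset_span hv)
      have hdQ₁ : ∀ x ∈ Q₁, d • x ∈ Submodule.span R {x₀} := by
        intro x hx
        rw [← hS] at hx
        refine Submodule.span_induction (p := fun x _ => d • x ∈ Submodule.span R {x₀})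
          (fun v hv => hdS v hv) (by show d • (0 : X) ∈ _; simp)
          (fun a b _ _ ha hb => by
            show d • (a + b) ∈ _
            rw [smul_add]
            exact Submodule.add_mem _ ha hb)
          (fun cc a _ ha => by
            show d • (cc • a) ∈ _
            rw [smul_comm]
            exact Submodule.smul_mem _ _ ha) hx
      -- the coefficient map into R ⧸ p
      have hcoef : ∀ x : Q₁, ∃ cx : R, cx • x₀ = d • (x : X) := fun x =>
        Submodule.mem_span_singleton.mp (hdQ₁ x x.2)
      choose c hc using hcoef
      set ℓ : Q₁ →ₗ[R] R ⧸ p :=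
        { toFun := fun x => Ideal.Quotient.mk p (c x)
          map_add' := by
            intro x y
            rw [← map_add, Ideal.Quotient.eq]
            apply hker
            have heq : (c (x + y) - (c x + c y)) • x₀ =
                d • ((x + y : Q₁) : X) - (d • (x : X) + d • (y : X)) := by
              rw [sub_smul, add_smul, hc (x + y), hc x, hc y]
            rw [heq]
            push_cast
            rw [smul_add, sub_self]
          map_smul' := by
            intro r x
            rw [RingHom.id_apply, ← mk_mul_smul, Ideal.Quotient.eq]
            apply hker
            have heq : (c (r • x) - r * c x) • x₀ =
                d • ((r • x : Q₁) : X) - r • (d • (x : X)) := by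
              rw [sub_smul, hc (r • x), mul_smul, hc x]
            rw [heq]
            push_cast
            rw [smul_comm d r, sub_self] } with hℓdef
      have hinj : Function.Injective ℓ := by
        have h0 : ∀ x : Q₁, ℓ x = 0 → x = 0 := by
          intro x hx
          have hcx : c x ∈ p := Ideal.Quotient.eq_zero_iff_mem.mp hx
          have hdx : d • (x : X) = 0 := by rw [← hc x]; exact hp0 _ hcx x₀
          exact Subtype.ext (by simpa using htf d hd _ hdx)
        intro x y hxy
        have h1 : ℓ (x - y) = 0 := by rw [map_sub, hxy, sub_self]
        have := h0 _ h1
        rwa [sub_eq_zero] at this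
      have hQ₁bad : NotPR A Q₁ := hbad.of_injective ℓ hinj
      -- the quotient X ⧸ Q₁ is generated by n elements
      have hgenZ : ∃ t : Fin n → X ⧸ Q₁, Submodule.span R (Set.range t) = ⊤ := by
        refine ⟨Q₁.mkQ ∘ s ∘ Fin.succ, ?_⟩
        have h1 : Submodule.span R (Set.range (Q₁.mkQ ∘ s)) = ⊤ := by
          rw [Set.range_comp, Submodule.span_image, hs, Submodule.map_top,
            Submodule.range_mkQ]
        rw [Fin.range_fin_succ] at h1
        have h2 : Q₁.mkQ (s 0) = 0 := by
          rw [Submodule.mkQ_apply, Submodule.Quotient.mk_eq_zero]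
          exact hx₀Q₁
        rw [Function.comp_apply, h2, Submodule.span_insert_zero] at h1
        exact h1
      have hp0Z : ∀ a ∈ p, ∀ z : X ⧸ Q₁, a • z = 0 := by
        intro a ha z
        obtain ⟨x, rfl⟩ := Submodule.Quotient.mk_surjective Q₁ z
        rw [← Submodule.Quotient.mk_smul, hp0 a ha x, Submodule.Quotient.mk_zero]
      have htfZ : ∀ t ∉ p, ∀ z : X ⧸ Q₁, t • z = 0 → z = 0 := by
        intro t ht z hz
        obtain ⟨x, rfl⟩ := Submodule.Quotient.mk_surjective Q₁ z
        rw [← Submodule.Quotient.mk_smul, Submodule.Quotient.mk_eq_zero] at hz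
        obtain ⟨d', hd', hsp⟩ := hz
        rw [Submodule.Quotient.mk_eq_zero]
        refine ⟨d' * t, fun h => ((hp.mem_or_mem h).elim hd' ht), ?_⟩
        rwa [mul_smul]
      have hZbad : NotPR A (X ⧸ Q₁) := ih (X ⧸ Q₁) hgenZ hp0Z htfZ
      exact notPR_ext Q₁ hQ₁bad hZbad

/-- The main lemma: if `R ⧸ p` is not partition regular for every associated prime `p` of a
noetherian module `M`, then `M` is not partition regular. -/
lemma mainLemma [IsNoetherianRing R] {M : Type*} [AddCommGroup M] [Module R M]
    [IsNoetherian R M]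
    (H : ∀ p : Ideal R, IsAssociatedPrime p M → NotPR A (R ⧸ p)) : NotPR A M := by
  have key : ∀ I : Submodule R M,
      (∀ p : Ideal R, IsAssociatedPrime p (M ⧸ I) → NotPR A (R ⧸ p)) → NotPR A (M ⧸ I) := by
    intro I
    induction I using IsNoetherian.induction with
    | _ I IH => ?_
    intro hass
    by_cases hsub : Subsingleton (M ⧸ I)
    · exact notPR_of_subsingleton _
    haveI : Nontrivial (M ⧸ I) := not_subsingleton_iff_nontrivial.mp hsub
    obtain ⟨p, hpS, hpmax⟩ := set_has_maximal_iff_noetherian.mpr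
      (isNoetherianRing_iff.mp inferInstance) (associatedPrimes R (M ⧸ I))
      (associatedPrimes.nonempty R (M ⧸ I))
    have hpA : IsAssociatedPrime p (M ⧸ I) := hpS
    obtain ⟨hp, w, hw⟩ := isAssociatedPrime_iff.mp hpA
    rw [Submodule.bot_colon'] at hw
    have hbadp : NotPR A (R ⧸ p) := hass p hpS
    -- the torsion filtration
    have hmonot : Monotone (fun i : ℕ =>
        Submodule.torsionBySet R (M ⧸ I) ((p ^ i : Ideal R) : Set R)) := by
      intro i j hij
      exact Submodule.torsionBySet_le_torsionBySet_of_subset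
        (SetLike.coe_subset_coe.mpr (Ideal.pow_le_pow_right hij))
    obtain ⟨n₀, hstab⟩ := monotone_stabilizes_iff_noetherian.mpr inferInstance
      ⟨fun i => Submodule.torsionBySet R (M ⧸ I) ((p ^ i : Ideal R) : Set R), hmonot⟩
    set N₁ := n₀ + 1 with hN₁def
    set K := Submodule.torsionBySet R (M ⧸ I) ((p ^ N₁ : Ideal R) : Set R) with hKdef
    have hKkill : ∀ a ∈ (p ^ N₁ : Ideal R), ∀ x ∈ K, a • x = 0 := by
      intro a ha x hx
      exact (Submodule.mem_torsionBySet_iff _ _).mp hx ⟨a, ha⟩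
    have hstab' : Submodule.torsionBySet R (M ⧸ I) ((p ^ (N₁ + 1) : Ideal R) : Set R) = K := by
      have h1 := hstab N₁ (by omega)
      have h2 := hstab (N₁ + 1) (by omega)
      exact h2.symm.trans h1
    have hKsat : ∀ x : M ⧸ I, (∀ cc ∈ p, cc • x ∈ K) → x ∈ K := by
      intro x hx
      rw [← hstab', Submodule.mem_torsionBySet_iff]
      rintro ⟨a, ha⟩
      have hle : (p : Ideal R) ^ (N₁ + 1) ≤
          LinearMap.ker (LinearMap.toSpanSingleton R (M ⧸ I) x) := by
        rw [pow_succ, Ideal.mul_le]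
        intro r hr t ht
        rw [LinearMap.mem_ker, LinearMap.toSpanSingleton_apply, mul_smul]
        exact hKkill r hr _ (hx t ht)
      have hmem := hle ha
      rwa [LinearMap.mem_ker, LinearMap.toSpanSingleton_apply] at hmem
    have hZD : ∀ v : M ⧸ I, v ≠ 0 → (∀ cc ∈ p, cc • v = 0) → ∀ t : R, t • v = 0 → t ∈ p := by
      intro v hv hpv t htv
      obtain ⟨P, hP, hann⟩ := exists_le_isAssociatedPrime_of_isNoetherianRing R v hv
      rw [Submodule.bot_colon'] at hann
      have hpP : p ≤ P := fun cc hcc =>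
        hann ((Submodule.mem_annihilator_span_singleton v cc).mpr (hpv cc hcc))
      have hPp : p = P := by
        by_contra hne
        exact hpmax P hP (lt_of_le_of_ne hpP hne)
      rw [hPp]
      exact hann ((Submodule.mem_annihilator_span_singleton v t).mpr htv)
    -- NotPR on each torsion level
    have hlevel : ∀ i : ℕ,
        NotPR A (Submodule.torsionBySet R (M ⧸ I) ((p ^ i : Ideal R) : Set R)) := by
      intro i
      induction i with
      | zero =>
        haveI : Subsingleton
            (Submodule.torsionBySet R (M ⧸ I) ((p ^ 0 : Ideal R) : Set R)) := by
          constructor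
          intro a b
          apply Subtype.ext
          have ha := (Submodule.mem_torsionBySet_iff _ _).mp a.2
            ⟨(1 : R), by simp [Ideal.one_eq_top]⟩
          have hb := (Submodule.mem_torsionBySet_iff _ _).mp b.2
            ⟨(1 : R), by simp [Ideal.one_eq_top]⟩
          simp only [one_smul] at ha hb
          rw [ha, hb]
        exact notPR_of_subsingleton _
      | succ i ihl =>
        set Ti := Submodule.torsionBySet R (M ⧸ I) ((p ^ i : Ideal R) : Set R) with hTidef
        set Ti1 := Submodule.torsionBySet R (M ⧸ I) ((p ^ (i + 1) : Ideal R) : Set R)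
          with hTi1def
        have hle : Ti ≤ Ti1 := hmonot (by omega)
        set N' : Submodule R Ti1 := Submodule.comap Ti1.subtype Ti with hN'def
        have h1 : NotPR A N' := ihl.of_injective
          (Submodule.comapSubtypeEquivOfLe hle).toLinearMap
          (Submodule.comapSubtypeEquivOfLe hle).injective
        have hp0Z : ∀ a ∈ p, ∀ z : Ti1 ⧸ N', a • z = 0 := by
          intro a ha z
          obtain ⟨x, rfl⟩ := Submodule.Quotient.mk_surjective N' z
          rw [← Submodule.Quotient.mk_smul, Submodule.Quotient.mk_eq_zero, hN'def,
            Submodule.mem_comap, Submodule.subtype_apply]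
          rw [Submodule.mem_torsionBySet_iff]
          rintro ⟨b, hb⟩
          have hba : b * a ∈ (p ^ (i + 1) : Ideal R) := by
            rw [pow_succ]
            exact Ideal.mul_mem_mul hb ha
          have hxc : ((a • x : Ti1) : M ⧸ I) = a • (x : M ⧸ I) := rfl
          rw [hxc, ← mul_smul]
          exact (Submodule.mem_torsionBySet_iff _ _).mp x.2 ⟨b * a, hba⟩
        have htfZ : ∀ t ∉ p, ∀ z : Ti1 ⧸ N', t • z = 0 → z = 0 := by
          intro t ht z hz
          obtain ⟨x, rfl⟩ := Submodule.Quotient.mk_surjective N' z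
          rw [← Submodule.Quotient.mk_smul, Submodule.Quotient.mk_eq_zero, hN'def,
            Submodule.mem_comap, Submodule.subtype_apply] at hz
          have hzc : ((t • x : Ti1) : M ⧸ I) = t • (x : M ⧸ I) := rfl
          rw [hzc] at hz
          rw [Submodule.Quotient.mk_eq_zero, hN'def, Submodule.mem_comap,
            Submodule.subtype_apply, Submodule.mem_torsionBySet_iff]
          rintro ⟨b, hb⟩
          show b • (x : M ⧸ I) = 0
          by_contra hbx
          refine ht (hZD (b • (x : M ⧸ I)) hbx ?_ t ?_)
          · intro cc hcc
            rw [← mul_smul]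
            have hccb : cc * b ∈ (p ^ (i + 1) : Ideal R) := by
              rw [pow_succ, mul_comm cc b]
              exact Ideal.mul_mem_mul hb hcc
            exact (Submodule.mem_torsionBySet_iff _ _).mp x.2 ⟨cc * b, hccb⟩
          · rw [smul_comm]
            exact (Submodule.mem_torsionBySet_iff _ _).mp hz ⟨b, hb⟩
        obtain ⟨nz, sz, hsz⟩ := Submodule.fg_iff_exists_fin_generating_family.mp
          (IsNoetherian.noetherian (⊤ : Submodule R (Ti1 ⧸ N')))
        have h2 : NotPR A (Ti1 ⧸ N') := genInd hp hbadp nz (Ti1 ⧸ N') ⟨sz, hsz⟩ hp0Z htfZ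
        exact notPR_ext N' h1 h2
    have hKbad : NotPR A K := hlevel N₁
    -- K is nonzero
    have hwne : w ≠ 0 := by
      rintro rfl
      apply hp.ne_top
      rw [hw, Submodule.span_singleton_eq_bot.mpr rfl, Submodule.annihilator_bot]
    have hwK : w ∈ K := by
      rw [hKdef, Submodule.mem_torsionBySet_iff]
      rintro ⟨a, ha⟩
      have hap : a ∈ p := Ideal.pow_le_self (by omega) ha
      have hmem : a ∈ (R ∙ w).annihilator := hw ▸ hap
      exact (Submodule.mem_annihilator_span_singleton w a).mp hmem
    have hKne : K ≠ ⊥ := (Submodule.ne_bot_iff K).mpr ⟨w, hwK, hwne⟩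
    set T : Submodule R M := Submodule.comap I.mkQ K with hTdef
    have hle' : I ≤ T := by
      intro x hx
      show I.mkQ x ∈ K
      rw [Submodule.mkQ_apply, (Submodule.Quotient.mk_eq_zero I).mpr hx]
      exact K.zero_mem
    have hIT : I < T := by
      obtain ⟨w', hw'K, hw'ne⟩ := (Submodule.ne_bot_iff K).mp hKne
      obtain ⟨u, rfl⟩ := Submodule.Quotient.mk_surjective I w'
      refine lt_of_le_of_ne hle' (fun hEq => hw'ne ?_)
      have huT : u ∈ T := by
        show I.mkQ u ∈ K
        rwa [Submodule.mkQ_apply]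
      rw [← hEq] at huT
      exact (Submodule.Quotient.mk_eq_zero I).mpr huT
    have hmapT : Submodule.map I.mkQ T = K := by
      rw [hTdef, Submodule.map_comap_eq, Submodule.range_mkQ, top_inf_eq]
    let e : ((M ⧸ I) ⧸ K) ≃ₗ[R] M ⧸ T :=
      (Submodule.quotEquivOfEq _ _ hmapT.symm).trans
        (Submodule.quotientQuotientEquivQuotient I T hle')
    -- associated primes of (M⧸I)⧸K are associated primes of M⧸I
    have hsatAss : ∀ q : Ideal R, IsAssociatedPrime q ((M ⧸ I) ⧸ K) →
        IsAssociatedPrime q (M ⧸ I) := by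
      rintro q hqA
      obtain ⟨hq, wb, hannq⟩ := isAssociatedPrime_iff.mp hqA
      rw [Submodule.bot_colon'] at hannq
      have hwbne : wb ≠ 0 := by
        rintro rfl
        apply hq.ne_top
        rw [hannq, Submodule.span_singleton_eq_bot.mpr rfl, Submodule.annihilator_bot]
      obtain ⟨w', rfl⟩ := Submodule.Quotient.mk_surjective K wb
      have hw'K : w' ∉ K := fun h => hwbne ((Submodule.Quotient.mk_eq_zero K).mpr h)
      have hpq : ¬ p ≤ q := by
        intro hpq
        apply hw'K
        apply hKsat
        intro cc hcc
        have ha1 : cc ∈ (R ∙ (Submodule.Quotient.mk w' : (M ⧸ I) ⧸ K)).annihilator :=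
          hannq ▸ hpq hcc
        have ha2 := (Submodule.mem_annihilator_span_singleton _ cc).mp ha1
        rwa [← Submodule.Quotient.mk_smul, Submodule.Quotient.mk_eq_zero] at ha2
      obtain ⟨x, hxp, hxq⟩ := SetLike.not_le_iff_exists.mp hpq
      refine isAssociatedPrime_iff.mpr ⟨hq, x ^ N₁ • w', ?_⟩
      ext a
      rw [Submodule.bot_colon', Submodule.mem_annihilator_span_singleton]
      constructor
      · intro ha
        have haw : a • w' ∈ K := by
          have ha1 : a ∈ (R ∙ (Submodule.Quotient.mk w' : (M ⧸ I) ⧸ K)).annihilator :=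
            hannq ▸ ha
          have ha2 := (Submodule.mem_annihilator_span_singleton _ a).mp ha1
          rwa [← Submodule.Quotient.mk_smul, Submodule.Quotient.mk_eq_zero] at ha2
        rw [smul_comm]
        exact hKkill _ (Ideal.pow_mem_pow hxp N₁) _ haw
      · intro ha
        have h3 : (a * x ^ N₁) • (Submodule.Quotient.mk w' : (M ⧸ I) ⧸ K) = 0 := by
          rw [← Submodule.Quotient.mk_smul, mul_smul, ha, Submodule.Quotient.mk_zero]
        have h4 : a * x ^ N₁ ∈ q := by
          rw [hannq]
          exact (Submodule.mem_annihilator_span_singleton _ _).mpr h3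
        rcases hq.mem_or_mem h4 with h | h
        · exact h
        · exact absurd (hq.mem_of_pow_mem _ h) hxq
    have hMT : NotPR A (M ⧸ T) := IH T hIT (fun q hq =>
      hass q (hsatAss q (e.isAssociatedPrime_iff.mpr hq)))
    have hWK : NotPR A ((M ⧸ I) ⧸ K) := hMT.of_injective e.toLinearMap e.injective
    exact notPR_ext K hKbad hWK
  let e0 : (M ⧸ (⊥ : Submodule R M)) ≃ₗ[R] M := Submodule.quotEquivOfEqBot ⊥ rfl
  have h0 := key ⊥ (fun p hp => H p (e0.isAssociatedPrime_iff.mp hp))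
  exact h0.of_injective e0.symm.toLinearMap e0.symm.injective

lemma isPR_map_iff (p : Ideal R) (r : ℕ) :
    IsPR (A.map (Ideal.Quotient.mk p)) (R ⧸ p) r ↔ IsPR A (R ⧸ p) r := by
  have hsm : ∀ (i : Fin k) (j : Fin l) (x : R ⧸ p),
      (A.map (Ideal.Quotient.mk p)) i j • x = A i j • x := fun i j x => by
    rw [Matrix.map_apply, mk_smul_eq_smul]
  constructor
  · intro h χ
    obtain ⟨m, h1, h2, h3⟩ := h χ
    refine ⟨m, h1, fun i => ?_, h3⟩
    rw [← h2 i]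
    exact Finset.sum_congr rfl fun j _ => (hsm i j (m j)).symm
  · intro h χ
    obtain ⟨m, h1, h2, h3⟩ := h χ
    refine ⟨m, h1, fun i => ?_, h3⟩
    rw [← h2 i]
    exact Finset.sum_congr rfl fun j _ => hsm i j (m j)

end Aux

theorem pr_module_iff_associatedPrime {R : Type*} [CommRing R] [IsNoetherianRing R]
    {k l : ℕ} (A : Matrix (Fin k) (Fin l) R)
    (M : Type*) [AddCommGroup M] [Module R M] [Module.Finite R M] :
    IsPRAll A M ↔
      ∃ p : Ideal R, IsAssociatedPrime p M ∧
        IsPRAll (A.map (Ideal.Quotient.mk p)) (R ⧸ p) := by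
  constructor
  · intro h
    by_contra hno
    push_neg at hno
    have H : ∀ p : Ideal R, IsAssociatedPrime p M → NotPR A (R ⧸ p) := by
      intro p hp
      rw [notPR_iff_not_isPRAll]
      intro hall
      exact hno p hp (fun r hr => (isPR_map_iff p r).mpr (hall r hr))
    exact (notPR_iff_not_isPRAll M).mp (mainLemma H) h
  · rintro ⟨p, hp, hPR⟩ r hr χ
    obtain ⟨hprime, x, hx⟩ := isAssociatedPrime_iff.mp hp
    rw [Submodule.bot_colon'] at hx
    have hker : p ≤ LinearMap.ker (LinearMap.toSpanSingleton R M x) := by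
      intro a ha
      rw [LinearMap.mem_ker, LinearMap.toSpanSingleton_apply]
      exact (Submodule.mem_annihilator_span_singleton x a).mp (hx ▸ ha)
    set φ : (R ⧸ p) →ₗ[R] M := Submodule.liftQ p (LinearMap.toSpanSingleton R M x) hker
      with hφdef
    have hφmk : ∀ a : R, φ (Ideal.Quotient.mk p a) = a • x := fun a => by
      show Submodule.liftQ p (LinearMap.toSpanSingleton R M x) hker
        (Submodule.Quotient.mk a) = a • x
      rw [Submodule.liftQ_apply, LinearMap.toSpanSingleton_apply]
    have hφinj : Function.Injective φ := by
      have h0 : ∀ u : R ⧸ p, φ u = 0 → u = 0 := by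
        intro u hu
        obtain ⟨a, rfl⟩ := Ideal.Quotient.mk_surjective u
        rw [hφmk] at hu
        rw [Ideal.Quotient.eq_zero_iff_mem, hx]
        exact (Submodule.mem_annihilator_span_singleton x a).mpr hu
      intro u v huv
      have h1 : φ (u - v) = 0 := by rw [map_sub, huv, sub_self]
      have := h0 _ h1
      rwa [sub_eq_zero] at this
    obtain ⟨m', hm0, hsol, hmono⟩ := hPR r hr (χ ∘ φ)
    refine ⟨fun j => φ (m' j), ?_, ?_, fun j j' => hmono j j'⟩
    · intro h0
      apply hm0
      funext j
      have := congrFun h0 j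
      simp only [Pi.zero_apply] at this
      rw [Pi.zero_apply]
      exact hφinj (by rw [this, map_zero])
    · intro i
      have hterm : ∀ j, A i j • φ (m' j) = φ ((A.map (Ideal.Quotient.mk p)) i j • m' j) := by
        intro j
        rw [Matrix.map_apply, mk_smul_eq_smul, map_smul]
      rw [Finset.sum_congr rfl fun j _ => hterm j, ← map_sum, hsol i, map_zero]
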